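/- Let (ν_t)_{t≥0} be any play distribution consistent with the memory-one strategy (σ_X^0[·], σ_X) of player X and the initial action σ_Y^0 of player Y in the strictly-alternating game in which Y moves first. Then for every measurable set E ⊆ S_X, the series ∑_{t=0}^∞ λ^{2t+1} ∫_{S_X×S_Y} [1_{E×S_Y}(x,y) − λ² · σ_X[x,y](E)] dν_t(x,y) converges and equals λ ∫_{S_Y} σ_X^0[y_0](E) dσ_Y^0(y_0). -/

import Mathlib

open MeasureTheory

/-- Akin-type lemma for strictly-alternating games in which `Y` moves first:
for any play distribution `ν` consistent with the memory-one strategy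
`(σX0[·], σX)` of player `X` and the initial action `σY0` of player `Y`, and
any measurable `E ⊆ S_X`, the series
`∑ λ^{2t+1} ∫ [1_{E×S_Y}(x,y) − λ²·σX[x,y](E)] dν_t` converges to
`λ ∫ σX0[y₀](E) dσY0(y₀)`. -/
theorem stmt_3
    {SX SY : Type*} [MeasurableSpace SX] [MeasurableSpace SY]
    (lam : ℝ) (hlam0 : 0 < lam) (hlam1 : lam < 1)
    (σX0 : ProbabilityTheory.Kernel SY SX) [ProbabilityTheory.IsMarkovKernel σX0]
    (σX : ProbabilityTheory.Kernel (SX × SY) SX) [ProbabilityTheory.IsMarkovKernel σX]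
    (σY0 : Measure SY) [IsProbabilityMeasure σY0]
    (ν : ℕ → Measure (SX × SY)) (hν : ∀ t, IsProbabilityMeasure (ν t))
    (hν0 : ∀ E : Set SX, MeasurableSet E →
      ν 0 (E ×ˢ (Set.univ : Set SY)) = ∫⁻ y0, σX0 y0 E ∂σY0)
    (hνsucc : ∀ (t : ℕ) (E : Set SX), MeasurableSet E →
      ν (t + 1) (E ×ˢ (Set.univ : Set SY)) = ∫⁻ q, σX q E ∂(ν t))
    (E : Set SX) (hE : MeasurableSet E) :
    HasSum
      (fun t : ℕ => lam ^ (2 * t + 1) *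
        ∫ q, ((E ×ˢ (Set.univ : Set SY)).indicator (fun _ => (1 : ℝ)) q
          - lam ^ 2 * ((σX q) E).toReal) ∂(ν t))
      (lam * ∫ y0, ((σX0 y0) E).toReal ∂σY0) := by
  have hsprod : MeasurableSet (E ×ˢ (Set.univ : Set SY)) := hE.prod MeasurableSet.univ
  set a : ℕ → ℝ := fun t => (ν t (E ×ˢ (Set.univ : Set SY))).toReal with ha
  set f : ℕ → ℝ := fun t => lam ^ (2 * t + 1) * a t with hf
  have ha0 : ∀ t, 0 ≤ a t := fun t => ENNReal.toReal_nonneg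
  have ha1 : ∀ t, a t ≤ 1 := by
    intro t
    haveI := hν t
    have h := prob_le_one (μ := ν t) (s := E ×ˢ (Set.univ : Set SY))
    have := ENNReal.toReal_mono ENNReal.one_ne_top h
    simpa using this
  have hterm : ∀ t, (lam ^ (2 * t + 1) *
        ∫ q, ((E ×ˢ (Set.univ : Set SY)).indicator (fun _ => (1 : ℝ)) q
          - lam ^ 2 * ((σX q) E).toReal) ∂(ν t)) = f t - f (t + 1) := by
    intro t
    haveI := hν t
    have hmeas : Measurable fun q => (σX q) E := σX.measurable_coe hE
    have hint1 : Integrable ((E ×ˢ (Set.univ : Set SY)).indicator (fun _ => (1 : ℝ))) (ν t) :=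
      (integrable_const 1).indicator hsprod
    have hint2 : Integrable (fun q => ((σX q) E).toReal) (ν t) := by
      apply integrable_toReal_of_lintegral_ne_top hmeas.aemeasurable
      have hle : ∫⁻ q, (σX q) E ∂(ν t) ≤ ∫⁻ _, 1 ∂(ν t) :=
        lintegral_mono fun q => prob_le_one
      simp only [lintegral_one, measure_univ, mul_one] at hle
      exact ne_top_of_le_ne_top (by simp) hle
    have h1 : ∫ q, (E ×ˢ (Set.univ : Set SY)).indicator (fun _ => (1 : ℝ)) q ∂(ν t) = a t := by
      rw [integral_indicator_const _ hsprod]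
      simp [ha, measureReal_def]
    have h2 : ∫ q, ((σX q) E).toReal ∂(ν t) = a (t + 1) := by
      rw [integral_toReal hmeas.aemeasurable (ae_of_all _ fun q => measure_lt_top _ _)]
      simp [ha, hνsucc t E hE]
    rw [integral_sub hint1 (hint2.const_mul _), h1, integral_const_mul, h2, hf]
    ring
  have hfs : Summable f := by
    have hg : Summable (fun t : ℕ => lam * (lam ^ 2) ^ t) :=
      (summable_geometric_of_lt_one (by positivity) (by nlinarith)).mul_left lam
    refine Summable.of_nonneg_of_le (fun t => ?_) (fun t => ?_) hg
    · exact mul_nonneg (by positivity) (ha0 t)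
    · have : f t ≤ lam ^ (2 * t + 1) * 1 :=
        mul_le_mul_of_nonneg_left (ha1 t) (by positivity)
      calc f t ≤ lam ^ (2 * t + 1) * 1 := this
        _ = lam * (lam ^ 2) ^ t := by rw [mul_one, ← pow_mul]; ring
  obtain ⟨S, hS⟩ := hfs
  have hshift : HasSum (fun n => f (n + 1)) (S - f 0) := by
    rw [hasSum_nat_add_iff]
    simpa using hS
  have htel : HasSum (fun t => f t - f (t + 1)) (f 0) := by
    have := hS.sub hshift
    simpa using this
  have hval : f 0 = lam * ∫ y0, ((σX0 y0) E).toReal ∂σY0 := by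
    have hmeas0 : Measurable fun y0 => (σX0 y0) E := σX0.measurable_coe hE
    rw [integral_toReal hmeas0.aemeasurable (ae_of_all _ fun y0 => measure_lt_top _ _)]
    simp [hf, ha, hν0 E hE]
  rw [← hval]
  exact htel.congr_fun fun t => hterm t
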